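/- The map D : ℋ₃(ℝ) → ℝ³ defined by D(x₁,x₂,x₃) = (x₁, λx₂, (λ-1)x₃ + x₁x₂) is a bijection for every λ ∈ ℝ \ {0,1}, and for each g ∈ ℋ₃(ℝ) the composition D ∘ L_g ∘ D^{-1} is an affine map of ℝ³ (where L_g is left multiplication by g). -/
import Mathlib


/-- The Heisenberg group product carried on Fin 3 → ℝ. -/
def h3MulF (a b : Fin 3 → ℝ) : Fin 3 → ℝ :=
  ![a 0 + b 0, a 1 + b 1, a 2 + b 2 + a 0 * b 1]

/-- The developing map D(x₁,x₂,x₃) = (x₁, λx₂, (λ-1)x₃ + x₁x₂). -/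
def devMap (l : ℝ) (x : Fin 3 → ℝ) : Fin 3 → ℝ :=
  ![x 0, l * x 1, (l - 1) * x 2 + x 0 * x 1]

/-- Explicit inverse of the developing map. -/
noncomputable def devInv (l : ℝ) (v : Fin 3 → ℝ) : Fin 3 → ℝ :=
  ![v 0, v 1 / l, (v 2 - v 0 * (v 1 / l)) / (l - 1)]

lemma dev_left_inv (l : ℝ) (hl0 : l ≠ 0) (hl1 : l ≠ 1) :
    Function.LeftInverse (devInv l) (devMap l) := by
  have h1 : l - 1 ≠ 0 := sub_ne_zero.mpr hl1
  intro x
  funext i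
  fin_cases i <;>
    simp [devMap, devInv] <;>
    field_simp <;> ring

lemma dev_right_inv (l : ℝ) (hl0 : l ≠ 0) (hl1 : l ≠ 1) :
    Function.RightInverse (devInv l) (devMap l) := by
  have h1 : l - 1 ≠ 0 := sub_ne_zero.mpr hl1
  intro v
  funext i
  fin_cases i <;>
    simp [devMap, devInv] <;>
    field_simp <;> ring

lemma dev_key (l : ℝ) (g x : Fin 3 → ℝ) :
    devMap l (h3MulF g x) =
      (Matrix.of ![![1, 0, 0], ![0, 1, 0], ![g 1, g 0, 1]]).mulVec (devMap l x) +
        ![g 0, l * g 1, (l - 1) * g 2 + g 0 * g 1] := by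
  funext i
  fin_cases i <;>
    simp [devMap, h3MulF, Matrix.mulVec, dotProduct, Fin.sum_univ_three] <;> ring

theorem stmt10 (l : ℝ) (hl0 : l ≠ 0) (hl1 : l ≠ 1) :
    Function.Bijective (devMap l) ∧
      (∀ g : Fin 3 → ℝ, ∃ (A : Matrix (Fin 3) (Fin 3) ℝ) (b : Fin 3 → ℝ),
        IsUnit A.det ∧
        ∀ v, devMap l (h3MulF g (Function.invFun (devMap l) v)) = A.mulVec v + b) := by
  have hli := dev_left_inv l hl0 hl1
  have hri := dev_right_inv l hl0 hl1
  have hbij : Function.Bijective (devMap l) := ⟨hli.injective, hri.surjective⟩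
  refine ⟨hbij, fun g => ?_⟩
  refine ⟨Matrix.of ![![1, 0, 0], ![0, 1, 0], ![g 1, g 0, 1]],
    ![g 0, l * g 1, (l - 1) * g 2 + g 0 * g 1], ?_, fun v => ?_⟩
  · simp [Matrix.det_fin_three]
  · rw [dev_key l g, Function.rightInverse_invFun hbij.surjective v]
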